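/- Let n ≥ 4 be an even integer, k ≥ 1, and let G be a simple graph on vertex set {1,…,n} whose edge set is invariant under the map u ↦ u' on both endpoints (i.e., u is adjacent to v if and only if u' is adjacent to v'). Let Q = {0} ∪ {q_{ij}^{uu} : 1 ≤ u ≤ n, 1 ≤ i < j ≤ k} ∪ {q_{ij}^{uv} : 1 ≤ i < j ≤ k, u,v ∈ {1,…,n}, u adjacent to v in G}. Then the following are equivalent: (1) there exist two affine hyperplanes H₁, H₂ in ℝ^{2k}, with no point of P ∪ Q on H₁ ∪ H₂, such that for every p ∈ P and q ∈ Q the segment between p and q meets H₁ ∪ H₂; (2) G has an independent set of size k, i.e., k pairwise distinct, pairwise non-adjacent vertices. -/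

import Mathlib

open scoped RealInnerProductSpace
open Real

/-- The scaffolding point `p_{iu}` in `ℝ^{2k}`: its `i`-th coordinate pair is
`(cos((u−1)·2π/n), sin((u−1)·2π/n))` and its other coordinates are `0`. -/
noncomputable def scafPt (n k : ℕ) (i : Fin k) (u : ℕ) :
    EuclideanSpace ℝ (Fin (2 * k)) :=
  (WithLp.equiv 2 (Fin (2 * k) → ℝ)).symm fun idx =>
    if (idx : ℕ) = 2 * (i : ℕ) then Real.cos (((u : ℝ) - 1) * (2 * Real.pi) / n)
    else if (idx : ℕ) = 2 * (i : ℕ) + 1 then Real.sin (((u : ℝ) - 1) * (2 * Real.pi) / n)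
    else 0

/-- The scaffolding point set `P = {p_{iu} : 1 ≤ i ≤ k, 1 ≤ u ≤ n}`. -/
noncomputable def scafSet (n k : ℕ) : Set (EuclideanSpace ℝ (Fin (2 * k))) :=
  {x | ∃ i : Fin k, ∃ u ∈ Finset.Icc 1 n, x = scafPt n k i u}

/-- The antipodal partner `u' ∈ {1,…,n}` of `u ∈ {1,…,n}`: the unique element of
`{1,…,n}` congruent to `u + n/2` modulo `n`. -/
def antip (n u : ℕ) : ℕ := (u - 1 + n / 2) % n + 1

/-- The almost antipodal partner `ū ∈ {1,…,n}` of `u ∈ {1,…,n}`: the unique element of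
`{1,…,n}` congruent to `u + n/2 + 1` modulo `n`. -/
def almostAntip (n u : ℕ) : ℕ := (u - 1 + n / 2 + 1) % n + 1

/-- The half of the scaffolding set selected by a tuple `(u_1,…,u_k) ∈ {1,…,n}^k`:
`P(u_1,…,u_k) = {p_{it} : 1 ≤ i ≤ k, t ∈ {1,…,n}, t ≡ u_i − s (mod n)` for some
`s ∈ {0,…,n/2−1}}`. -/
noncomputable def scafHalf (n k : ℕ) (U : Fin k → ℕ) :
    Set (EuclideanSpace ℝ (Fin (2 * k))) :=
  {x | ∃ i : Fin k, ∃ t ∈ Finset.Icc 1 n,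
    (∃ s < n / 2, t + s ≡ U i [MOD n]) ∧ x = scafPt n k i t}

/-- The affine hyperplane `{x : ⟪a, x⟫ = b}`. -/
def hyp {k : ℕ} (a : EuclideanSpace ℝ (Fin (2 * k))) (b : ℝ) :
    Set (EuclideanSpace ℝ (Fin (2 * k))) := {x | ⟪a, x⟫ = b}

/-- The constraint point `q_{ij}^{uv}`: the centroid of `p_{iu}, p_{iū}, p_{jv}, p_{jv̄}`. -/
noncomputable def constrPt (n k : ℕ) (i j : Fin k) (u v : ℕ) :
    EuclideanSpace ℝ (Fin (2 * k)) :=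
  (1 / 4 : ℝ) • (scafPt n k i u + scafPt n k i (almostAntip n u)
    + scafPt n k j v + scafPt n k j (almostAntip n v))

/-- The constraint set `Q`: the origin together with the points `q_{ij}^{uu}` for
`u ∈ {1,…,n}`, `i < j`, and the points `q_{ij}^{uv}` for `i < j` and `u, v` adjacent. -/
noncomputable def constrSet (n k : ℕ) (Adj : ℕ → ℕ → Prop) :
    Set (EuclideanSpace ℝ (Fin (2 * k))) :=
  insert 0
    ({x | ∃ i j : Fin k, i < j ∧ ∃ u ∈ Finset.Icc 1 n, x = constrPt n k i j u u}
      ∪ {x | ∃ i j : Fin k, i < j ∧ ∃ u v : ℕ, Adj u v ∧ x = constrPt n k i j u v})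

noncomputable def theta (n u : ℕ) : ℝ := ((u : ℝ) - 1) * (2 * Real.pi) / n

lemma scafPt_apply (n k : ℕ) (i : Fin k) (u : ℕ) (idx : Fin (2*k)) :
    scafPt n k i u idx =
      if (idx : ℕ) = 2 * (i : ℕ) then Real.cos (theta n u)
      else if (idx : ℕ) = 2 * (i : ℕ) + 1 then Real.sin (theta n u)
      else 0 := rfl

lemma inner_scafPt (n k : ℕ) (a : EuclideanSpace ℝ (Fin (2 * k))) (i : Fin k) (u : ℕ) :
    ⟪a, scafPt n k i u⟫ =
      a ⟨2 * i, by omega⟩ * Real.cos (theta n u)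
      + a ⟨2 * i + 1, by have := i.isLt; omega⟩ * Real.sin (theta n u) := by
  classical
  have hI : (2 * (i:ℕ)) < 2 * k := by omega
  have hJ : (2 * (i:ℕ) + 1) < 2 * k := by have := i.isLt; omega
  rw [PiLp.inner_apply]
  simp only [RCLike.inner_apply, starRingEnd_apply, star_trivial]
  have : ∀ idx : Fin (2*k),
      a idx * scafPt n k i u idx =
      (if idx = (⟨2*i, hI⟩ : Fin (2*k)) then a ⟨2*i, hI⟩ * Real.cos (theta n u) else 0)
      + (if idx = (⟨2*i+1, hJ⟩ : Fin (2*k)) then a ⟨2*i+1, hJ⟩ * Real.sin (theta n u) else 0) := by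
    intro idx
    rw [scafPt_apply]
    rcases eq_or_ne idx ⟨2*i, hI⟩ with h | h
    · subst h; simp
    · rcases eq_or_ne idx ⟨2*i+1, hJ⟩ with h' | h'
      · subst h'; simp [Fin.ext_iff]
      · have h1 : (idx : ℕ) ≠ 2 * i := fun hc => h (Fin.ext hc)
        have h2 : (idx : ℕ) ≠ 2 * i + 1 := fun hc => h' (Fin.ext hc)
        simp [h1, h2, h, h']
  rw [Finset.sum_congr rfl (fun idx _ => (mul_comm _ _).trans (this idx)), Finset.sum_add_distrib]
  simp

lemma theta_mod (n : ℕ) (hn0 : 0 < n) (x : ℕ) :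
    ∃ c : ℤ, theta n (x % n + 1) = (x : ℝ) * (2*π)/n + c * (2*π) := by
  obtain ⟨q, hq⟩ : ∃ q : ℕ, ((x % n : ℕ) : ℝ) = (x : ℝ) - (n:ℝ) * (q : ℝ) := by
    refine ⟨x / n, ?_⟩
    have hnd : x % n + n * (x / n) = x := Nat.mod_add_div x n
    have := congrArg (fun t : ℕ => (t : ℝ)) hnd
    push_cast at this
    linarith
  refine ⟨-(q : ℤ), ?_⟩
  unfold theta
  push_cast
  rw [hq]
  have hne : (n:ℝ) ≠ 0 := by positivity
  field_simp
  ring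

lemma half_cast (n : ℕ) (hn : Even n) : ((n/2 : ℕ) : ℝ) = (n : ℝ) / 2 := by
  obtain ⟨m, hm⟩ := hn
  subst hm
  have : (m + m) / 2 = m := by omega
  rw [this]
  push_cast
  ring

lemma theta_antip (n u : ℕ) (hn : Even n) (hn0 : 0 < n) (hu : 1 ≤ u) :
    ∃ c : ℤ, theta n (antip n u) = theta n u + π + c * (2 * π) := by
  obtain ⟨c, hc⟩ := theta_mod n hn0 (u - 1 + n / 2)
  refine ⟨c, ?_⟩
  rw [antip, hc]
  have h1 : ((u - 1 + n/2 : ℕ) : ℝ) = ((u:ℝ) - 1) + (n:ℝ)/2 := by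
    rw [Nat.cast_add, half_cast n hn, Nat.cast_sub hu]
    push_cast; ring
  rw [h1]
  unfold theta
  have hne : (n:ℝ) ≠ 0 := by positivity
  field_simp

lemma theta_almostAntip (n u : ℕ) (hn : Even n) (hn0 : 0 < n) (hu : 1 ≤ u) :
    ∃ c : ℤ, theta n (almostAntip n u) = theta n u + (π + 2*π/n) + c * (2 * π) := by
  obtain ⟨c, hc⟩ := theta_mod n hn0 (u - 1 + n / 2 + 1)
  refine ⟨c, ?_⟩
  rw [almostAntip, hc]
  have h1 : ((u - 1 + n/2 + 1 : ℕ) : ℝ) = ((u:ℝ) - 1) + (n:ℝ)/2 + 1 := by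
    rw [Nat.cast_add, Nat.cast_add, half_cast n hn, Nat.cast_sub hu]
    push_cast; ring
  rw [h1]
  unfold theta
  have hne : (n:ℝ) ≠ 0 := by positivity
  field_simp
  ring

lemma cos_theta_antip (n u : ℕ) (hn : Even n) (hn0 : 0 < n) (hu : 1 ≤ u) :
    Real.cos (theta n (antip n u)) = - Real.cos (theta n u) := by
  obtain ⟨c, hc⟩ := theta_antip n u hn hn0 hu
  rw [hc, Real.cos_add_int_mul_two_pi, Real.cos_add_pi]

lemma sin_theta_antip (n u : ℕ) (hn : Even n) (hn0 : 0 < n) (hu : 1 ≤ u) :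
    Real.sin (theta n (antip n u)) = - Real.sin (theta n u) := by
  obtain ⟨c, hc⟩ := theta_antip n u hn hn0 hu
  have : theta n u + π + c * (2*π) = (theta n u + c * (2*π)) + π := by ring
  rw [hc, this, Real.sin_add_pi]
  congr 1
  have h2 : (c : ℝ) * (2*π) = (2*c : ℤ) * π := by push_cast; ring
  rw [h2, Real.sin_add_int_mul_pi]
  have : ((-1 : ℝ)) ^ (2*c : ℤ) = 1 := by
    rw [zpow_mul]
    norm_num
  rw [this, one_mul]

lemma scafPt_antip (n k : ℕ) (i : Fin k) (u : ℕ) (hn : Even n) (hn0 : 0 < n) (hu : 1 ≤ u) :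
    scafPt n k i (antip n u) = - scafPt n k i u := by
  apply PiLp.ext
  intro idx
  have hneg : (- scafPt n k i u) idx = - (scafPt n k i u idx) := rfl
  rw [hneg, scafPt_apply, scafPt_apply]
  split_ifs with h1 h2
  · exact cos_theta_antip n u hn hn0 hu
  · exact sin_theta_antip n u hn hn0 hu
  · ring

lemma halfhalf (n : ℕ) (hn : Even n) : n / 2 + n / 2 = n := by
  obtain ⟨m, rfl⟩ := hn; omega

lemma antip_mem (n u : ℕ) (hn0 : 0 < n) : antip n u ∈ Finset.Icc 1 n := by
  simp only [Finset.mem_Icc, antip]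
  have := Nat.mod_lt (u - 1 + n / 2) hn0
  omega

lemma almostAntip_mem (n u : ℕ) (hn0 : 0 < n) : almostAntip n u ∈ Finset.Icc 1 n := by
  simp only [Finset.mem_Icc, almostAntip]
  have := Nat.mod_lt (u - 1 + n / 2 + 1) hn0
  omega

lemma antip_almostAntip (n u : ℕ) (hne : Even n) (hu : 1 ≤ u) :
    antip n (almostAntip n u) = u % n + 1 := by
  unfold antip almostAntip
  have h1 : (u - 1 + n / 2 + 1) % n + 1 - 1 = (u - 1 + n / 2 + 1) % n := by omega
  rw [h1, Nat.mod_add_mod]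
  have h2 : u - 1 + n / 2 + 1 + n / 2 = u + n := by
    have := halfhalf n hne; omega
  rw [h2, Nat.add_mod_right]

lemma antip_antip_self (n u : ℕ) (hne : Even n) (hu : 1 ≤ u) (hun : u ≤ n) :
    antip n (antip n u) = u := by
  unfold antip
  have h1 : (u - 1 + n / 2) % n + 1 - 1 = (u - 1 + n / 2) % n := by omega
  rw [h1, Nat.mod_add_mod]
  have h2 : u - 1 + n / 2 + n / 2 = (u - 1) + n := by
    have := halfhalf n hne; omega
  rw [h2, Nat.add_mod_right, Nat.mod_eq_of_lt (by omega)]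
  omega

lemma step_iter (n u₀ : ℕ) (hn0 : 0 < n) (hu : 1 ≤ u₀) (hun : u₀ ≤ n) (m : ℕ) (hne : Even n)
    (S : ℕ → Prop) (hbase : S u₀)
    (hstep : ∀ u, 1 ≤ u → u ≤ n → S u → S (antip n (almostAntip n u))) :
    S ((u₀ - 1 + m) % n + 1) := by
  induction m with
  | zero =>
    have : (u₀ - 1 + 0) % n = u₀ - 1 := by
      rw [Nat.add_zero, Nat.mod_eq_of_lt (by omega)]
    rw [this]
    have : u₀ - 1 + 1 = u₀ := by omega
    rw [this]; exact hbase
  | succ m ih =>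
    have h1 : 1 ≤ (u₀ - 1 + m) % n + 1 := by omega
    have h2 : (u₀ - 1 + m) % n + 1 ≤ n := by
      have := Nat.mod_lt (u₀ - 1 + m) hn0; omega
    have := hstep _ h1 h2 ih
    rwa [antip_almostAntip n _ hne h1, Nat.mod_add_mod, Nat.add_assoc] at this

lemma inner_constrPt (n k : ℕ) (a : EuclideanSpace ℝ (Fin (2 * k))) (i j : Fin k) (u v : ℕ) :
    ⟪a, constrPt n k i j u v⟫ = (1/4 : ℝ) *
      (⟪a, scafPt n k i u⟫ + ⟪a, scafPt n k i (almostAntip n u)⟫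
        + ⟪a, scafPt n k j v⟫ + ⟪a, scafPt n k j (almostAntip n v)⟫) := by
  rw [constrPt, real_inner_smul_right, inner_add_right, inner_add_right, inner_add_right]

lemma segment_inner (k : ℕ) (a p q x : EuclideanSpace ℝ (Fin (2 * k)))
    (hx : x ∈ segment ℝ p q) :
    ∃ s t : ℝ, 0 ≤ s ∧ 0 ≤ t ∧ s + t = 1 ∧ ⟪a, x⟫ = s * ⟪a, p⟫ + t * ⟪a, q⟫ := by
  obtain ⟨s, t, hs, ht, hst, rfl⟩ := hx
  exact ⟨s, t, hs, ht, hst, by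
    rw [inner_add_right, real_inner_smul_right, real_inner_smul_right]⟩

lemma seg_cross (k : ℕ) (a p q : EuclideanSpace ℝ (Fin (2 * k))) (b : ℝ)
    (hP : b < ⟪a, p⟫) (hQ : ⟪a, q⟫ < b) :
    (segment ℝ p q ∩ hyp a b).Nonempty := by
  set P := ⟪a, p⟫
  set Q := ⟪a, q⟫
  have hPQ : 0 < P - Q := by linarith
  refine ⟨((b - Q)/(P - Q)) • p + ((P - b)/(P - Q)) • q, ⟨(b-Q)/(P-Q), (P-b)/(P-Q),
    div_nonneg (by linarith) hPQ.le, div_nonneg (by linarith) hPQ.le,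
    by rw [← add_div, div_eq_one_iff_eq hPQ.ne']; ring, rfl⟩, ?_⟩
  show ⟪a, _⟫ = b
  rw [inner_add_right, real_inner_smul_right, real_inner_smul_right]
  rw [div_mul_eq_mul_div, div_mul_eq_mul_div, ← add_div, div_eq_iff hPQ.ne']
  ring

lemma frac_mono (n : ℕ) (c a b : ℝ) (h : a ≤ b) (hc : 0 < c) (hn : (0:ℝ) < n) :
    a * c / n ≤ b * c / n := by
  have hpos : 0 < c / (n:ℝ) := by positivity
  calc a * c / n = a * (c/n) := by ring
    _ ≤ b * (c/n) := mul_le_mul_of_nonneg_right h hpos.le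
    _ = b * c / n := by ring

lemma sin_pi_div_pos (n : ℕ) (hn : 4 ≤ n) : 0 < Real.sin (π / n) := by
  have h0 : (0:ℝ) < n := by positivity
  have hn4 : (4:ℝ) ≤ n := by exact_mod_cast hn
  apply Real.sin_pos_of_pos_of_lt_pi
  · positivity
  · rw [div_lt_iff₀ h0]
    nlinarith [Real.pi_pos]

lemma sin_mono_aux (x y : ℝ) (hx : 0 ≤ x) (hxy : x ≤ y) (hy : y ≤ π/2) :
    Real.sin x ≤ Real.sin y := by
  have := Real.cos_le_cos_of_nonneg_of_le_pi (x := π/2 - y) (y := π/2 - x)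
    (by linarith) (by linarith [Real.pi_pos]) (by linarith)
  rwa [Real.cos_pi_div_two_sub, Real.cos_pi_div_two_sub] at this

lemma half_pi_eq (n : ℕ) (hn0 : (0:ℝ) < n) : ((n:ℝ)/2) * π / n = π / 2 := by
  field_simp

/-- `sin(rπ/n) ≥ sin(π/n)` for natural `1 ≤ r ≤ n - 1`. -/
lemma sin_res_bound (n r : ℕ) (hn : 4 ≤ n) (hr1 : 1 ≤ r) (hrn : r ≤ n - 1) :
    Real.sin (π / n) ≤ Real.sin ((r:ℝ) * π / n) := by
  have h0 : (0:ℝ) < n := by positivity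
  have hpi := Real.pi_pos
  have key : ∀ ρ : ℕ, 1 ≤ ρ → 2 * ρ ≤ n → Real.sin (π/n) ≤ Real.sin ((ρ:ℝ) * π / n) := by
    intro ρ h1 h2
    have hc1 : (1:ℝ) ≤ (ρ:ℝ) := by exact_mod_cast h1
    have hc2 : (ρ:ℝ) ≤ (n:ℝ)/2 := by
      have : (2*ρ:ℝ) ≤ n := by exact_mod_cast h2
      linarith
    have e1 : π / (n:ℝ) = 1 * π / n := by ring
    rw [e1]
    apply sin_mono_aux _ _ (by positivity) (frac_mono n π 1 ρ hc1 hpi h0)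
    calc (ρ:ℝ) * π / n ≤ ((n:ℝ)/2) * π / n := frac_mono n π _ _ hc2 hpi h0
      _ = π / 2 := half_pi_eq n h0
  rcases le_or_gt (2 * r) n with h | h
  · exact key r hr1 h
  · have hsub : (r:ℝ) * π / n = π - ((n - r : ℕ) : ℝ) * π / n := by
      rw [Nat.cast_sub (by omega : r ≤ n)]
      field_simp
      ring
    rw [hsub, Real.sin_pi_sub]
    exact key (n - r) (by omega) (by omega)

/-- For odd integers `m`, `|sin(mπ/n)| ≥ sin(π/n)` when `n` is even. -/
lemma odd_sin_bound (n : ℕ) (hn : 4 ≤ n) (hne : Even n) (m : ℤ) (hm : Odd m) :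
    Real.sin (π / n) ≤ |Real.sin ((m:ℝ) * π / n)| := by
  have hn0 : (0:ℤ) < n := by positivity
  have h0 : (0:ℝ) < n := by positivity
  set r : ℤ := m % n with hr
  set q : ℤ := m / n with hq
  have hmr : m = n * q + r := (Int.mul_ediv_add_emod m n).symm
  have hr0 : 0 ≤ r := Int.emod_nonneg m (by positivity)
  have hrn : r < n := Int.emod_lt_of_pos m hn0
  have hrodd : Odd r := by
    obtain ⟨nn, hnn⟩ := hne
    obtain ⟨mm, hmm⟩ := hm
    refine ⟨mm - (nn:ℤ) * q, ?_⟩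
    have h1 : (n:ℤ) = nn + nn := by exact_mod_cast hnn
    have h2 : (n:ℤ) * q = (nn:ℤ) * q + (nn:ℤ) * q := by rw [h1]; ring
    omega
  have hsplit : (m:ℝ) * π / n = (r:ℝ) * π / n + (q:ℤ) * π := by
    have : (m:ℝ) = (n:ℝ) * q + r := by exact_mod_cast congrArg (fun z : ℤ => (z:ℝ)) hmr
    rw [this]
    field_simp
    ring
  rw [hsplit, Real.sin_add_int_mul_pi, abs_mul]
  have habs : |((-1:ℝ)) ^ q| = 1 := by
    rcases Int.even_or_odd q with h | h
    · rw [h.neg_one_zpow, abs_one]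
    · rw [h.neg_one_zpow, abs_neg, abs_one]
  rw [habs, one_mul]
  have hr1 : 1 ≤ r := by
    rcases hrodd with ⟨t, ht⟩
    omega
  have hcast : (r:ℝ) = ((r.toNat : ℕ) : ℝ) := by
    exact_mod_cast (congrArg (fun z : ℤ => (z:ℝ)) (Int.toNat_of_nonneg hr0)).symm
  rw [hcast]
  have hsin := sin_res_bound n r.toNat hn (by omega) (by omega)
  have hnonneg : 0 ≤ Real.sin (((r.toNat : ℕ):ℝ) * π / n) := by
    apply Real.sin_nonneg_of_nonneg_of_le_pi
    · positivity
    · have hle : ((r.toNat:ℕ):ℝ) ≤ (n:ℝ) := by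
        have : (r.toNat : ℕ) ≤ n := by omega
        exact_mod_cast this
      calc ((r.toNat:ℕ):ℝ) * π / n ≤ (n:ℝ) * π / n := frac_mono n π _ _ hle Real.pi_pos h0
        _ = π := by field_simp
  rw [abs_of_nonneg hnonneg]
  exact hsin

/-- `cos(r·2π/n) ≤ cos(2π/n)` for natural `1 ≤ r ≤ n-1`. -/
lemma cos_res_bound (n r : ℕ) (hn : 4 ≤ n) (hr1 : 1 ≤ r) (hrn : r ≤ n - 1) :
    Real.cos ((r:ℝ) * (2*π) / n) ≤ Real.cos (2*π / n) := by
  have h0 : (0:ℝ) < n := by positivity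
  have hpi := Real.pi_pos
  have h2pi : (0:ℝ) < 2*π := by linarith
  have key : ∀ ρ : ℕ, 1 ≤ ρ → 2 * ρ ≤ n →
      Real.cos ((ρ:ℝ) * (2*π) / n) ≤ Real.cos (2*π / n) := by
    intro ρ h1 h2
    have hc1 : (1:ℝ) ≤ (ρ:ℝ) := by exact_mod_cast h1
    have hc2 : (ρ:ℝ) ≤ (n:ℝ)/2 := by
      have : (2*ρ:ℝ) ≤ n := by exact_mod_cast h2
      linarith
    have e1 : 2*π / (n:ℝ) = 1 * (2*π) / n := by ring
    rw [e1]
    apply Real.cos_le_cos_of_nonneg_of_le_pi (by positivity) ?_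
      (frac_mono n (2*π) 1 ρ hc1 h2pi h0)
    calc (ρ:ℝ) * (2*π) / n ≤ ((n:ℝ)/2) * (2*π) / n := frac_mono n (2*π) _ _ hc2 h2pi h0
      _ = π := by field_simp
  rcases le_or_gt (2 * r) n with h | h
  · exact key r hr1 h
  · have hsub : (r:ℝ) * (2*π) / n = 2*π - ((n - r : ℕ) : ℝ) * (2*π) / n := by
      rw [Nat.cast_sub (by omega : r ≤ n)]
      field_simp
      ring
    rw [hsub, Real.cos_two_pi_sub]
    exact key (n - r) (by omega) (by omega)

lemma cos_mul_le (n : ℕ) (hn : 4 ≤ n) (m : ℤ) (hm : ¬ ((n:ℤ) ∣ m)) :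
    Real.cos ((m:ℝ) * (2*π) / n) ≤ Real.cos (2*π / n) := by
  have hn0 : (0:ℤ) < n := by positivity
  have h0 : (0:ℝ) < n := by positivity
  set r : ℤ := m % n with hr
  set q : ℤ := m / n with hq
  have hmr : m = n * q + r := (Int.mul_ediv_add_emod m n).symm
  have hr0 : 0 ≤ r := Int.emod_nonneg m (by positivity)
  have hrn : r < n := Int.emod_lt_of_pos m hn0
  have hr1 : 1 ≤ r := by
    rcases eq_or_lt_of_le hr0 with h | h
    · exfalso; apply hm; rw [Int.dvd_iff_emod_eq_zero]; omega
    · omega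
  have hsplit : (m:ℝ) * (2*π) / n = (r:ℝ) * (2*π) / n + (q:ℤ) * (2*π) := by
    have : (m:ℝ) = (n:ℝ) * q + r := by exact_mod_cast congrArg (fun z : ℤ => (z:ℝ)) hmr
    rw [this]
    field_simp
    ring
  rw [hsplit, Real.cos_add_int_mul_two_pi]
  have hcast : (r:ℝ) = ((r.toNat : ℕ) : ℝ) := by
    exact_mod_cast (congrArg (fun z : ℤ => (z:ℝ)) (Int.toNat_of_nonneg hr0)).symm
  rw [hcast]
  exact cos_res_bound n r.toNat hn (by omega) (by omega)

lemma shift_pi_eq (n : ℕ) (hne : Even n) (hn0 : (0:ℝ) < n) (m : ℤ) :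
    (m:ℝ) * (2*π) / n = ((m - (n/2 : ℕ) : ℤ):ℝ) * (2*π) / n + π := by
  have hc : ((n/2 : ℕ):ℝ) = (n:ℝ)/2 := half_cast n hne
  rw [Int.cast_sub, Int.cast_natCast, hc]
  field_simp
  ring

lemma cos_mul_ge (n : ℕ) (hn : 4 ≤ n) (hne : Even n) (m : ℤ)
    (hm : ¬ ((n:ℤ) ∣ (m - (n/2 : ℕ)))) :
    - Real.cos (2*π / n) ≤ Real.cos ((m:ℝ) * (2*π) / n) := by
  have h0 : (0:ℝ) < n := by positivity
  rw [shift_pi_eq n hne h0 m, Real.cos_add_pi, neg_le_neg_iff]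
  exact cos_mul_le n hn _ hm

lemma cos_mul_dvd (n : ℕ) (hn0 : 0 < n) (m : ℤ) (hm : (n:ℤ) ∣ m) :
    Real.cos ((m:ℝ) * (2*π) / n) = 1 := by
  obtain ⟨c, rfl⟩ := hm
  have h0 : (0:ℝ) < n := by positivity
  have : ((n * c : ℤ):ℝ) * (2*π) / n = 0 + (c:ℤ) * (2*π) := by
    push_cast
    field_simp
    ring
  rw [this, Real.cos_add_int_mul_two_pi, Real.cos_zero]

lemma cos_mul_antip (n : ℕ) (hn0 : 0 < n) (hne : Even n) (m : ℤ)
    (hm : (n:ℤ) ∣ (m - (n/2:ℕ))) :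
    Real.cos ((m:ℝ) * (2*π) / n) = -1 := by
  have h0 : (0:ℝ) < n := by positivity
  rw [shift_pi_eq n hne h0 m, Real.cos_add_pi, cos_mul_dvd n hn0 _ hm]

lemma cong_eq (n u v : ℕ) (hu1 : 1 ≤ u) (hun : u ≤ n) (hv1 : 1 ≤ v) (hvn : v ≤ n)
    (h : (n:ℤ) ∣ ((u:ℤ) - v)) : u = v := by
  have := Int.eq_zero_of_abs_lt_dvd h (by
    rw [abs_sub_lt_iff]
    constructor <;>
    · push_cast
      omega)
  omega

lemma antip_cast (n v : ℕ) (hv1 : 1 ≤ v) :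
    ∃ c : ℤ, (antip n v : ℤ) = (v:ℤ) + (n/2:ℕ) - n * c := by
  refine ⟨((v - 1 + n/2)/n : ℕ), ?_⟩
  unfold antip
  have hnd : (v - 1 + n/2) % n + n * ((v - 1 + n/2) / n) = v - 1 + n/2 :=
    Nat.mod_add_div _ _
  have := congrArg (fun t : ℕ => (t : ℤ)) hnd
  push_cast at this ⊢
  omega

lemma cong_antip (n u v : ℕ) (hn : 4 ≤ n) (hu1 : 1 ≤ u) (hun : u ≤ n) (hv1 : 1 ≤ v)
    (hvn : v ≤ n) (h : (n:ℤ) ∣ ((u:ℤ) - v - (n/2:ℕ))) : u = antip n v := by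
  have hmem := antip_mem n v (by omega)
  simp only [Finset.mem_Icc] at hmem
  obtain ⟨c, hc⟩ := antip_cast n v hv1
  apply cong_eq n u (antip n v) hu1 hun hmem.1 hmem.2
  rw [hc]
  obtain ⟨d, hd⟩ := h
  refine ⟨d + c, by linear_combination hd⟩

lemma convex_gt (s t A B b : ℝ) (hs : 0 ≤ s) (ht : 0 ≤ t) (hst : s + t = 1)
    (hA : b < A) (hB : b < B) : b < s * A + t * B := by
  rcases eq_or_lt_of_le hs with h | h
  · have ht1 : t = 1 := by linarith
    rw [← h, ht1]; linarith
  · have e1 := mul_lt_mul_of_pos_left hA h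
    have e2 := mul_le_mul_of_nonneg_left hB.le ht
    have e3 : s * b + t * b = b := by rw [← add_mul, hst, one_mul]
    linarith

lemma convex_lt (s t A B b : ℝ) (hs : 0 ≤ s) (ht : 0 ≤ t) (hst : s + t = 1)
    (hA : A < b) (hB : B < b) : s * A + t * B < b := by
  have := convex_gt s t (-A) (-B) (-b) hs ht hst (by linarith) (by linarith)
  linarith

lemma cover_aux (s t P b : ℝ) (hs : 0 ≤ s) (ht : 0 ≤ t) (hst : s + t = 1) (hb : 0 < b)
    (hP : P ≠ b) (heq : s * P = b) : b < P := by
  rcases hP.lt_or_gt with h | h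
  · exfalso
    rcases eq_or_lt_of_le hs with hs0 | hs0
    · rw [← hs0] at heq; simp at heq; linarith
    · have h1 : s * P < s * b := mul_lt_mul_of_pos_left h hs0
      nlinarith
  · exact h

lemma hard_dir (n k : ℕ) (hn : 4 ≤ n) (hneven : Even n) (hk : 1 ≤ k)
    (Adj : ℕ → ℕ → Prop) (hsym : ∀ u v, Adj u v → Adj v u)
    (a₁ a₂ : EuclideanSpace ℝ (Fin (2*k))) (b₁ b₂ : ℝ) (hb₁ : 0 < b₁) (hb₂ : 0 < b₂)
    (hoff : ∀ x ∈ scafSet n k ∪ constrSet n k Adj, x ∉ hyp a₁ b₁ ∪ hyp a₂ b₂)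
    (hsep : ∀ p ∈ scafSet n k, ∀ q ∈ constrSet n k Adj,
      (segment ℝ p q ∩ (hyp a₁ b₁ ∪ hyp a₂ b₂)).Nonempty) :
    ∃ f : Fin k → ℕ, (∀ m, f m ∈ Finset.Icc 1 n) ∧ Function.Injective f ∧
      ∀ m m' : Fin k, m ≠ m' → ¬Adj (f m) (f m') := by
  have n0 : 0 < n := by omega
  have memP : ∀ (i : Fin k) (u : ℕ), u ∈ Finset.Icc 1 n → scafPt n k i u ∈ scafSet n k :=
    fun i u hu => ⟨i, u, hu, rfl⟩
  have h0Q : (0 : EuclideanSpace ℝ (Fin (2*k))) ∈ constrSet n k Adj :=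
    Set.mem_insert _ _
  have hoffP : ∀ (i : Fin k) (u : ℕ), u ∈ Finset.Icc 1 n →
      ⟪a₁, scafPt n k i u⟫ ≠ b₁ ∧ ⟪a₂, scafPt n k i u⟫ ≠ b₂ := by
    intro i u hu
    have h := hoff _ (Or.inl (memP i u hu))
    rw [Set.mem_union] at h
    push_neg at h
    exact h
  -- no antipodal pair on the far side of a single hyperplane
  have noPair : ∀ (a : EuclideanSpace ℝ (Fin (2*k))) (b : ℝ), 0 < b →
      ∀ (i : Fin k) (u : ℕ), 1 ≤ u →
      ¬(b < ⟪a, scafPt n k i u⟫ ∧ b < ⟪a, scafPt n k i (antip n u)⟫) := by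
    rintro a b hb i u hu ⟨h1, h2⟩
    rw [scafPt_antip n k i u hneven n0 hu, inner_neg_right] at h2
    linarith
  -- every scaffolding point is beyond one of the hyperplanes
  have cover : ∀ (i : Fin k) (u : ℕ), u ∈ Finset.Icc 1 n →
      b₁ < ⟪a₁, scafPt n k i u⟫ ∨ b₂ < ⟪a₂, scafPt n k i u⟫ := by
    intro i u hu
    obtain ⟨x, hxseg, hxhyp⟩ := hsep _ (memP i u hu) 0 h0Q
    rw [Set.mem_union] at hxhyp
    rcases hxhyp with h | h
    · left
      obtain ⟨s, t, hs, ht, hst, hval⟩ := segment_inner k a₁ _ _ x hxseg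
      have hx1 : ⟪a₁, x⟫ = b₁ := h
      rw [inner_zero_right, mul_zero, add_zero] at hval
      exact cover_aux s t _ b₁ hs ht hst hb₁ (hoffP i u hu).1 (by rw [← hval, hx1])
    · right
      obtain ⟨s, t, hs, ht, hst, hval⟩ := segment_inner k a₂ _ _ x hxseg
      have hx2 : ⟪a₂, x⟫ = b₂ := h
      rw [inner_zero_right, mul_zero, add_zero] at hval
      exact cover_aux s t _ b₂ hs ht hst hb₂ (hoffP i u hu).2 (by rw [← hval, hx2])
  -- a point cannot be beyond both hyperplanes
  have disj : ∀ (i : Fin k) (u : ℕ), u ∈ Finset.Icc 1 n →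
      ¬(b₁ < ⟪a₁, scafPt n k i u⟫ ∧ b₂ < ⟪a₂, scafPt n k i u⟫) := by
    rintro i u hu ⟨h1, h2⟩
    have hu1 : 1 ≤ u := (Finset.mem_Icc.mp hu).1
    have hmem := antip_mem n u n0
    rcases cover i (antip n u) hmem with h | h
    · exact noPair a₁ b₁ hb₁ i u hu1 ⟨h1, h⟩
    · exact noPair a₂ b₂ hb₂ i u hu1 ⟨h2, h⟩
  -- existence of an almost-antipodal pair beyond hyperplane 1, in each circle
  have pairExists : ∀ i : Fin k, ∃ u : ℕ, u ∈ Finset.Icc 1 n ∧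
      b₁ < ⟪a₁, scafPt n k i u⟫ ∧ b₁ < ⟪a₁, scafPt n k i (almostAntip n u)⟫ := by
    intro i
    by_contra hno
    push_neg at hno
    have hbase : ∃ u₀ : ℕ, u₀ ∈ Finset.Icc 1 n ∧ b₁ < ⟪a₁, scafPt n k i u₀⟫ := by
      by_contra hb0
      push_neg at hb0
      have h1mem : (1:ℕ) ∈ Finset.Icc 1 n := Finset.mem_Icc.mpr ⟨le_refl 1, by omega⟩
      have c1 := (cover i 1 h1mem).resolve_left (not_lt.mpr (hb0 1 h1mem))
      have c2 := (cover i (antip n 1) (antip_mem n 1 n0)).resolve_left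
        (not_lt.mpr (hb0 _ (antip_mem n 1 n0)))
      exact noPair a₂ b₂ hb₂ i 1 (le_refl 1) ⟨c1, c2⟩
    obtain ⟨u₀, hu₀, hp₀⟩ := hbase
    have hu₀1 : 1 ≤ u₀ := (Finset.mem_Icc.mp hu₀).1
    have hu₀n : u₀ ≤ n := (Finset.mem_Icc.mp hu₀).2
    have hstep : ∀ u, 1 ≤ u → u ≤ n → b₁ < ⟪a₁, scafPt n k i u⟫ →
        b₁ < ⟪a₁, scafPt n k i (antip n (almostAntip n u))⟫ := by
      intro u h1 h2 hp
      have hum := almostAntip_mem n u n0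
      have humem : u ∈ Finset.Icc 1 n := Finset.mem_Icc.mpr ⟨h1, h2⟩
      have h3 : ¬ b₁ < ⟪a₁, scafPt n k i (almostAntip n u)⟫ := not_lt.mpr (hno u humem hp)
      have h4 := (cover i _ hum).resolve_left h3
      have h5 : ¬ b₂ < ⟪a₂, scafPt n k i (antip n (almostAntip n u))⟫ :=
        fun hx => noPair a₂ b₂ hb₂ i (almostAntip n u) (Finset.mem_Icc.mp hum).1 ⟨h4, hx⟩
      exact (cover i _ (antip_mem n _ n0)).resolve_right h5
    have := step_iter n u₀ n0 hu₀1 hu₀n (n/2) hneven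
      (fun u => b₁ < ⟪a₁, scafPt n k i u⟫) hp₀ hstep
    exact noPair a₁ b₁ hb₁ i u₀ hu₀1 ⟨hp₀, this⟩
  choose f hfmem hf1 hf2 using pairExists
  -- the master contradiction
  have contra : ∀ (i j : Fin k), i < j → ∀ u v : ℕ, u ∈ Finset.Icc 1 n →
      v ∈ Finset.Icc 1 n →
      b₁ < ⟪a₁, scafPt n k i u⟫ → b₁ < ⟪a₁, scafPt n k i (almostAntip n u)⟫ →
      b₁ < ⟪a₁, scafPt n k j v⟫ → b₁ < ⟪a₁, scafPt n k j (almostAntip n v)⟫ →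
      constrPt n k i j u v ∈ constrSet n k Adj → False := by
    intro i j hij u v hu hv h1 h2 h3 h4 hqmem
    have negs : ∀ (i' : Fin k) (w : ℕ), w ∈ Finset.Icc 1 n →
        b₁ < ⟪a₁, scafPt n k i' w⟫ → ⟪a₂, scafPt n k i' w⟫ < b₂ := by
      intro i' w hw hp
      exact lt_of_le_of_ne (not_lt.mp (fun hx => disj i' w hw ⟨hp, hx⟩)) (hoffP i' w hw).2
    have hq1 : b₁ < ⟪a₁, constrPt n k i j u v⟫ := by
      rw [inner_constrPt]
      linarith
    have hq2 : ⟪a₂, constrPt n k i j u v⟫ < b₂ := by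
      rw [inner_constrPt]
      have e1 := negs i u hu h1
      have e2 := negs i _ (almostAntip_mem n u n0) h2
      have e3 := negs j v hv h3
      have e4 := negs j _ (almostAntip_mem n v n0) h4
      linarith
    obtain ⟨x, hxseg, hxhyp⟩ := hsep _ (memP i u hu) _ hqmem
    rw [Set.mem_union] at hxhyp
    rcases hxhyp with h | h
    · obtain ⟨s, t, hs, ht, hst, hval⟩ := segment_inner k a₁ _ _ x hxseg
      have hx1 : ⟪a₁, x⟫ = b₁ := h
      have := convex_gt s t _ _ b₁ hs ht hst h1 hq1
      rw [← hval, hx1] at this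
      exact lt_irrefl _ this
    · obtain ⟨s, t, hs, ht, hst, hval⟩ := segment_inner k a₂ _ _ x hxseg
      have hx2 : ⟪a₂, x⟫ = b₂ := h
      have := convex_lt s t _ _ b₂ hs ht hst (negs i u hu h1) hq2
      rw [← hval, hx2] at this
      exact lt_irrefl _ this
  refine ⟨f, hfmem, ?_, ?_⟩
  · intro m m' heq
    by_contra hne
    rcases Ne.lt_or_gt hne with hlt | hlt
    · have hmem : constrPt n k m m' (f m) (f m) ∈ constrSet n k Adj :=
        Set.mem_insert_iff.mpr (Or.inr (Set.mem_union_left _ ⟨m, m', hlt, f m, hfmem m, rfl⟩))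
      exact contra m m' hlt (f m) (f m) (hfmem m) (hfmem m) (hf1 m) (hf2 m)
        (heq ▸ hf1 m') (heq ▸ hf2 m') hmem
    · have hmem : constrPt n k m' m (f m') (f m') ∈ constrSet n k Adj :=
        Set.mem_insert_iff.mpr (Or.inr (Set.mem_union_left _ ⟨m', m, hlt, f m', hfmem m', rfl⟩))
      exact contra m' m hlt (f m') (f m') (hfmem m') (hfmem m') (hf1 m') (hf2 m')
        (heq ▸ hf1 m) (heq ▸ hf2 m) hmem
  · intro m m' hne hadj
    rcases Ne.lt_or_gt hne with hlt | hlt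
    · have hmem : constrPt n k m m' (f m) (f m') ∈ constrSet n k Adj :=
        Set.mem_insert_iff.mpr (Or.inr (Set.mem_union_right _ ⟨m, m', hlt, f m, f m', hadj, rfl⟩))
      exact contra m m' hlt (f m) (f m') (hfmem m) (hfmem m') (hf1 m) (hf2 m)
        (hf1 m') (hf2 m') hmem
    · have hmem : constrPt n k m' m (f m') (f m) ∈ constrSet n k Adj :=
        Set.mem_insert_iff.mpr (Or.inr (Set.mem_union_right _
          ⟨m', m, hlt, f m', f m, hsym _ _ hadj, rfl⟩))
      exact contra m' m hlt (f m') (f m) (hfmem m') (hfmem m) (hf1 m') (hf2 m')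
        (hf1 m) (hf2 m) hmem

lemma easy_dir (n k : ℕ) (hn : 4 ≤ n) (hneven : Even n) (hk : 1 ≤ k)
    (Adj : ℕ → ℕ → Prop)
    (hsupp : ∀ u v, Adj u v → u ∈ Finset.Icc 1 n ∧ v ∈ Finset.Icc 1 n)
    (hinv : ∀ u ∈ Finset.Icc 1 n, ∀ v ∈ Finset.Icc 1 n,
      (Adj u v ↔ Adj (antip n u) (antip n v)))
    (f : Fin k → ℕ) (hfmem : ∀ m, f m ∈ Finset.Icc 1 n) (hfinj : Function.Injective f)
    (hfind : ∀ m m' : Fin k, m ≠ m' → ¬Adj (f m) (f m')) :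
    ∃ (a₁ a₂ : EuclideanSpace ℝ (Fin (2 * k))) (b₁ b₂ : ℝ), a₁ ≠ 0 ∧ a₂ ≠ 0 ∧
      (∀ x ∈ scafSet n k ∪ constrSet n k Adj, x ∉ hyp a₁ b₁ ∪ hyp a₂ b₂) ∧
      (∀ p ∈ scafSet n k, ∀ q ∈ constrSet n k Adj,
        (segment ℝ p q ∩ (hyp a₁ b₁ ∪ hyp a₂ b₂)).Nonempty) := by
  have n0 : 0 < n := by omega
  have h0 : (0:ℝ) < n := by positivity
  have hpi := Real.pi_pos
  have hsin : 0 < Real.sin (π / n) := sin_pi_div_pos n hn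
  have hcos1 : Real.cos (2*π/n) < 1 := by
    have := Real.cos_lt_cos_of_nonneg_of_le_pi (x := 0) (y := 2*π/n) (le_refl 0)
      (by rw [div_le_iff₀ h0]; nlinarith [show (4:ℝ) ≤ n by exact_mod_cast hn]) (by positivity)
    rwa [Real.cos_zero] at this
  have hcosm1 : -1 ≤ Real.cos (2*π/n) := Real.neg_one_le_cos _
  set b : ℝ := Real.sin (π/n) * (3 + Real.cos (2*π/n)) / 4 with hbdef
  have hb0 : 0 < b := by
    apply div_pos (mul_pos hsin (by linarith)) (by norm_num)
  have hMb : Real.sin (π/n) * (1 + Real.cos (2*π/n)) / 2 < b := by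
    rw [hbdef]
    rw [div_lt_div_iff₀ (by norm_num) (by norm_num)]
    nlinarith
  have hbs : b < Real.sin (π/n) := by
    rw [hbdef, div_lt_iff₀ (by norm_num : (0:ℝ) < 4)]
    nlinarith
  -- the normal vector
  set φ : Fin k → ℝ := fun i => theta n (f i) - π/2 + π/n with hφdef
  set a : EuclideanSpace ℝ (Fin (2*k)) :=
    (WithLp.equiv 2 (Fin (2 * k) → ℝ)).symm (fun idx =>
      if (idx : ℕ) % 2 = 0 then Real.cos (φ ⟨(idx:ℕ)/2, by have := idx.isLt; omega⟩)
      else Real.sin (φ ⟨(idx:ℕ)/2, by have := idx.isLt; omega⟩)) with hadef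
  have haI : ∀ i : Fin k, a ⟨2 * (i:ℕ), by omega⟩ = Real.cos (φ i) := by
    intro i
    show (if (2 * (i:ℕ)) % 2 = 0 then _ else _) = _
    rw [if_pos (by omega)]
    congr 2
    exact Fin.ext (by simp only [Fin.val_mk]; omega)
  have haJ : ∀ i : Fin k, a ⟨2 * (i:ℕ) + 1, by have := i.isLt; omega⟩ = Real.sin (φ i) := by
    intro i
    show (if (2 * (i:ℕ) + 1) % 2 = 0 then _ else _) = _
    rw [if_neg (by omega)]
    congr 2
    exact Fin.ext (by simp only [Fin.val_mk]; omega)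
  have hPval : ∀ (i : Fin k) (t : ℕ), ⟪a, scafPt n k i t⟫ = Real.cos (theta n t - φ i) := by
    intro i t
    rw [inner_scafPt, haI, haJ, Real.cos_sub]
    ring
  -- the scaffolding estimate
  have hPbound : ∀ (i : Fin k) (t : ℕ), Real.sin (π/n) ≤ |⟪a, scafPt n k i t⟫| := by
    intro i t
    rw [hPval]
    set m : ℤ := 2 * ((t:ℤ) - (f i : ℤ)) - 1 with hmdef
    have hsplit : theta n t - φ i = (m:ℝ) * π / n + π/2 := by
      rw [hφdef]
      unfold theta
      push_cast [hmdef]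
      field_simp
      ring
    rw [hsplit, Real.cos_add_pi_div_two, abs_neg]
    exact odd_sin_bound n hn hneven m ⟨(t:ℤ) - (f i :ℤ) - 1, by ring⟩
  -- pair sums on a circle
  have pairSum : ∀ (i : Fin k) (u : ℕ), 1 ≤ u →
      ⟪a, scafPt n k i u⟫ + ⟪a, scafPt n k i (almostAntip n u)⟫
        = 2 * Real.sin (π/n) * Real.cos ((((u:ℤ) - (f i : ℤ) : ℤ):ℝ) * (2*π) / n) := by
    intro i u hu
    rw [hPval, hPval]
    obtain ⟨c, hc⟩ := theta_almostAntip n u hneven n0 hu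
    have e1 : theta n (almostAntip n u) - φ i
        = ((theta n u - φ i + 2*π/n) + c * (2*π)) + π := by
      rw [hc]; ring
    rw [e1, Real.cos_add_pi, Real.cos_add_int_mul_two_pi]
    have e2 : Real.cos (theta n u - φ i) - Real.cos (theta n u - φ i + 2*π/n)
        = -2 * Real.sin (((theta n u - φ i) + (theta n u - φ i + 2*π/n))/2)
          * Real.sin (((theta n u - φ i) - (theta n u - φ i + 2*π/n))/2) :=
      Real.cos_sub_cos _ _
    have e3 : ((theta n u - φ i) - (theta n u - φ i + 2*π/n))/2 = -(π/n) := by ring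
    have e4 : ((theta n u - φ i) + (theta n u - φ i + 2*π/n))/2
        = ((theta n u - theta n (f i)) + π/2) := by
      rw [hφdef]; ring
    rw [e3, e4, Real.sin_neg, Real.sin_add_pi_div_two] at e2
    have e5 : theta n u - theta n (f i) = (((u:ℤ) - (f i : ℤ) : ℤ):ℝ) * (2*π) / n := by
      unfold theta
      push_cast
      ring
    rw [e5] at e2
    linarith [e2]
  -- constraint point values
  have hQval : ∀ (i j : Fin k) (u v : ℕ), 1 ≤ u → 1 ≤ v →
      ⟪a, constrPt n k i j u v⟫ = Real.sin (π/n) / 2 *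
        (Real.cos ((((u:ℤ) - (f i : ℤ) : ℤ):ℝ) * (2*π) / n)
          + Real.cos ((((v:ℤ) - (f j : ℤ) : ℤ):ℝ) * (2*π) / n)) := by
    intro i j u v hu hv
    rw [inner_constrPt]
    have h1 := pairSum i u hu
    have h2 := pairSum j v hv
    linarith [h1, h2]
  -- constraint estimate
  have hQbound : ∀ q ∈ constrSet n k Adj, |⟪a, q⟫| < b := by
    intro q hq
    rcases Set.mem_insert_iff.mp hq with rfl | hq'
    · rw [inner_zero_right, abs_zero]
      exact hb0
    have main : ∀ (i j : Fin k) (u v : ℕ), i ≠ j → u ∈ Finset.Icc 1 n →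
        v ∈ Finset.Icc 1 n → ¬(u = f i ∧ v = f j) →
        ¬(u = antip n (f i) ∧ v = antip n (f j)) →
        |⟪a, constrPt n k i j u v⟫| < b := by
      intro i j u v hij hu hv hne1 hne2
      rw [Finset.mem_Icc] at hu hv
      have hfi := Finset.mem_Icc.mp (hfmem i)
      have hfj := Finset.mem_Icc.mp (hfmem j)
      rw [hQval i j u v (by omega) (by omega)]
      set m1 : ℤ := (u:ℤ) - (f i : ℤ) with hm1
      set m2 : ℤ := (v:ℤ) - (f j : ℤ) with hm2
      have hub : Real.cos ((m1:ℝ)*(2*π)/n) + Real.cos ((m2:ℝ)*(2*π)/n)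
          ≤ 1 + Real.cos (2*π/n) := by
        by_cases hd1 : (n:ℤ) ∣ m1
        · have hu_eq : u = f i := cong_eq n u (f i) (by omega) (by omega) (by omega) (by omega) hd1
          have hd2 : ¬ (n:ℤ) ∣ m2 := by
            intro hd2
            exact hne1 ⟨hu_eq, cong_eq n v (f j) (by omega) (by omega) (by omega) (by omega) hd2⟩
          have := cos_mul_le n hn m2 hd2
          have h1 := cos_mul_dvd n n0 m1 hd1
          linarith
        · have := cos_mul_le n hn m1 hd1
          have h2 := Real.cos_le_one ((m2:ℝ)*(2*π)/n)
          linarith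
      have hlb : -(1 + Real.cos (2*π/n))
          ≤ Real.cos ((m1:ℝ)*(2*π)/n) + Real.cos ((m2:ℝ)*(2*π)/n) := by
        by_cases hd1 : (n:ℤ) ∣ (m1 - (n/2 : ℕ))
        · have hu_eq : u = antip n (f i) :=
            cong_antip n u (f i) hn (by omega) (by omega) (by omega) (by omega) hd1
          have hd2 : ¬ (n:ℤ) ∣ (m2 - (n/2 : ℕ)) := by
            intro hd2
            exact hne2 ⟨hu_eq,
              cong_antip n v (f j) hn (by omega) (by omega) (by omega) (by omega) hd2⟩
          have := cos_mul_ge n hn hneven m2 hd2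
          have h1 := cos_mul_antip n n0 hneven m1 hd1
          linarith
        · have := cos_mul_ge n hn hneven m1 hd1
          have h2 := Real.neg_one_le_cos ((m2:ℝ)*(2*π)/n)
          linarith
      have habs : |Real.cos ((m1:ℝ)*(2*π)/n) + Real.cos ((m2:ℝ)*(2*π)/n)|
          ≤ 1 + Real.cos (2*π/n) := abs_le.mpr ⟨hlb, hub⟩
      calc |Real.sin (π/n)/2 * (Real.cos ((m1:ℝ)*(2*π)/n) + Real.cos ((m2:ℝ)*(2*π)/n))|
          = Real.sin (π/n)/2 * |Real.cos ((m1:ℝ)*(2*π)/n) + Real.cos ((m2:ℝ)*(2*π)/n)| := by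
            rw [abs_mul, abs_of_pos (by linarith : (0:ℝ) < Real.sin (π/n)/2)]
        _ ≤ Real.sin (π/n)/2 * (1 + Real.cos (2*π/n)) :=
            mul_le_mul_of_nonneg_left habs (by linarith)
        _ = Real.sin (π/n) * (1 + Real.cos (2*π/n)) / 2 := by ring
        _ < b := hMb
    rcases hq' with ⟨i, j, hij, u, hu, rfl⟩ | ⟨i, j, hij, u, v, hadj, rfl⟩
    · refine main i j u u hij.ne hu hu ?_ ?_
      · rintro ⟨h1, h2⟩
        exact hij.ne (hfinj (h1 ▸ h2 : f i = f j))
      · rintro ⟨h1, h2⟩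
        have hfij : antip n (f i) = antip n (f j) := h1 ▸ h2
        have hfi := Finset.mem_Icc.mp (hfmem i)
        have hfj := Finset.mem_Icc.mp (hfmem j)
        have : f i = f j := by
          rw [← antip_antip_self n (f i) hneven hfi.1 hfi.2, hfij,
            antip_antip_self n (f j) hneven hfj.1 hfj.2]
        exact hij.ne (hfinj this)
    · obtain ⟨hu, hv⟩ := hsupp u v hadj
      refine main i j u v hij.ne hu hv ?_ ?_
      · rintro ⟨rfl, rfl⟩
        exact hfind i j hij.ne hadj
      · rintro ⟨rfl, rfl⟩
        exact hfind i j hij.ne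
          ((hinv (f i) (hfmem i) (f j) (hfmem j)).mpr hadj)
  -- assemble
  refine ⟨a, -a, b, b, ?_, ?_, ?_, ?_⟩
  · intro ha0
    have := hPbound ⟨0, by omega⟩ 1
    rw [ha0, inner_zero_left, abs_zero] at this
    linarith
  · intro ha0
    have := hPbound ⟨0, by omega⟩ 1
    have ha0' : a = 0 := by
      have := neg_eq_zero.mp ha0
      exact this
    rw [ha0', inner_zero_left, abs_zero] at this
    linarith
  · intro x hx
    rcases hx with ⟨i, u, hu, rfl⟩ | hxQ
    · rintro (hxh | hxh)
      · have h1 : ⟪a, scafPt n k i u⟫ = b := hxh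
        have := hPbound i u
        rw [h1, abs_of_pos hb0] at this
        linarith
      · have h1 : ⟪-a, scafPt n k i u⟫ = b := hxh
        rw [inner_neg_left] at h1
        have := hPbound i u
        have h2 : ⟪a, scafPt n k i u⟫ = -b := by linarith
        rw [h2, abs_neg, abs_of_pos hb0] at this
        linarith
    · rintro (hxh | hxh)
      · have h1 : ⟪a, x⟫ = b := hxh
        have := hQbound x hxQ
        rw [h1, abs_of_pos hb0] at this
        linarith
      · have h1 : ⟪-a, x⟫ = b := hxh
        rw [inner_neg_left] at h1
        have := hQbound x hxQ
        have h2 : ⟪a, x⟫ = -b := by linarith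
        rw [h2, abs_neg, abs_of_pos hb0] at this
        linarith
  · rintro p ⟨i, u, hu, rfl⟩ q hq
    have hP := hPbound i u
    have hQ := hQbound q hq
    have hQ1 : ⟪a, q⟫ < b := lt_of_le_of_lt (le_abs_self _) hQ
    have hQ2 : -b < ⟪a, q⟫ := by
      have := neg_abs_le ⟪a, q⟫
      linarith
    rcases le_or_gt 0 ⟪a, scafPt n k i u⟫ with hsgn | hsgn
    · have hPb : b < ⟪a, scafPt n k i u⟫ := by
        rw [abs_of_nonneg hsgn] at hP
        linarith
      obtain ⟨x, hx1, hx2⟩ := seg_cross k a (scafPt n k i u) q b hPb hQ1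
      exact ⟨x, hx1, Or.inl hx2⟩
    · have hPb : b < ⟪-a, scafPt n k i u⟫ := by
        rw [inner_neg_left]
        rw [abs_of_neg hsgn] at hP
        linarith
      have hQb : ⟪-a, q⟫ < b := by
        rw [inner_neg_left]
        linarith
      obtain ⟨x, hx1, hx2⟩ := seg_cross k (-a) (scafPt n k i u) q b hPb hQb
      exact ⟨x, hx1, Or.inr hx2⟩

lemma hyp_smul {k : ℕ} (a : EuclideanSpace ℝ (Fin (2 * k))) (b ε : ℝ) (hε : ε ≠ 0) :
    hyp (ε • a) (ε * b) = hyp a b := by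
  ext x
  simp only [hyp, Set.mem_setOf_eq, real_inner_smul_left]
  exact mul_right_inj' hε

/-- For a graph `G` on `{1,…,n}` whose adjacency is invariant under `u ↦ u'` on both
endpoints, the sets `P` and `Q` can be separated by two hyperplanes (each separating
segment between a point of `P` and a point of `Q` meets one of the two hyperplanes,
and no point of `P ∪ Q` lies on either hyperplane) iff `G` has an independent set of
size `k`. -/
theorem two_hyperplane_separation_iff_independent_set (n k : ℕ) (hn : 4 ≤ n)
    (hneven : Even n) (hk : 1 ≤ k) (Adj : ℕ → ℕ → Prop)
    (hsym : ∀ u v, Adj u v → Adj v u) (hirr : ∀ u, ¬Adj u u)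
    (hsupp : ∀ u v, Adj u v → u ∈ Finset.Icc 1 n ∧ v ∈ Finset.Icc 1 n)
    (hinv : ∀ u ∈ Finset.Icc 1 n, ∀ v ∈ Finset.Icc 1 n,
      (Adj u v ↔ Adj (antip n u) (antip n v))) :
    (∃ (a₁ a₂ : EuclideanSpace ℝ (Fin (2 * k))) (b₁ b₂ : ℝ), a₁ ≠ 0 ∧ a₂ ≠ 0 ∧
      (∀ x ∈ scafSet n k ∪ constrSet n k Adj, x ∉ hyp a₁ b₁ ∪ hyp a₂ b₂) ∧
      (∀ p ∈ scafSet n k, ∀ q ∈ constrSet n k Adj,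
        (segment ℝ p q ∩ (hyp a₁ b₁ ∪ hyp a₂ b₂)).Nonempty))
    ↔ (∃ f : Fin k → ℕ, (∀ m, f m ∈ Finset.Icc 1 n) ∧ Function.Injective f ∧
        ∀ m m' : Fin k, m ≠ m' → ¬Adj (f m) (f m')) := by
  constructor
  · rintro ⟨a₁, a₂, b₁, b₂, ha₁, ha₂, hoff, hsep⟩
    have h0mem : (0 : EuclideanSpace ℝ (Fin (2*k))) ∈ scafSet n k ∪ constrSet n k Adj :=
      Or.inr (Set.mem_insert _ _)
    have h0off := hoff 0 h0mem
    rw [Set.mem_union] at h0off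
    push_neg at h0off
    have hb₁ : b₁ ≠ 0 := by
      intro h
      exact h0off.1 (show ⟪a₁, 0⟫ = b₁ by rw [inner_zero_right, h])
    have hb₂ : b₂ ≠ 0 := by
      intro h
      exact h0off.2 (show ⟪a₂, 0⟫ = b₂ by rw [inner_zero_right, h])
    set ε₁ : ℝ := if 0 < b₁ then 1 else -1 with hε₁def
    set ε₂ : ℝ := if 0 < b₂ then 1 else -1 with hε₂def
    have hε₁ : ε₁ ≠ 0 := by
      rw [hε₁def]; split_ifs <;> norm_num
    have hε₂ : ε₂ ≠ 0 := by
      rw [hε₂def]; split_ifs <;> norm_num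
    have hB₁ : 0 < ε₁ * b₁ := by
      rw [hε₁def]; split_ifs with h
      · linarith
      · have : b₁ < 0 := lt_of_le_of_ne (not_lt.mp h) hb₁
        nlinarith
    have hB₂ : 0 < ε₂ * b₂ := by
      rw [hε₂def]; split_ifs with h
      · linarith
      · have : b₂ < 0 := lt_of_le_of_ne (not_lt.mp h) hb₂
        nlinarith
    have he₁ : hyp (ε₁ • a₁) (ε₁ * b₁) = hyp a₁ b₁ := hyp_smul a₁ b₁ ε₁ hε₁
    have he₂ : hyp (ε₂ • a₂) (ε₂ * b₂) = hyp a₂ b₂ := hyp_smul a₂ b₂ ε₂ hε₂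
    apply hard_dir n k hn hneven hk Adj hsym (ε₁ • a₁) (ε₂ • a₂) (ε₁ * b₁) (ε₂ * b₂)
      hB₁ hB₂
    · rw [he₁, he₂]
      exact hoff
    · rw [he₁, he₂]
      exact hsep
  · rintro ⟨f, h1, h2, h3⟩
    exact easy_dir n k hn hneven hk Adj hsupp hinv f h1 h2 h3
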